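/- Let n = 2m > 3 be even and let a, b be natural numbers with 1 ≤ a < b ≤ n-1, both even, and gcd(a+b, n) = 2. Then there exists an odd index i with 1 ≤ i ≤ n-1 such that n divides ((i+1)/2)·a + ((i-1)/2)·b. -/
import Mathlib


theorem even_sides_early_closure
    (m a b : ℕ) (hm : 2 ≤ m) (ha : Even a) (hb : Even b)
    (ha1 : 1 ≤ a) (hab : a < b) (hbn : b ≤ 2 * m - 1)
    (hgcd : Nat.gcd (a + b) (2 * m) = 2) :
    ∃ i : ℕ, Odd i ∧ 1 ≤ i ∧ i ≤ 2 * m - 1 ∧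
      2 * m ∣ ((i + 1) / 2) * a + ((i - 1) / 2) * b := by
  obtain ⟨a', ha'⟩ := ha
  obtain ⟨b', hb'⟩ := hb
  have ha' : a = 2 * a' := by omega
  have hb' : b = 2 * b' := by omega
  set c := a' + b' with hc
  have hsum : a + b = 2 * c := by omega
  have hcm : Nat.gcd c m = 1 := by
    have : 2 * Nat.gcd c m = 2 := by
      rw [← Nat.gcd_mul_left, ← hsum, hgcd]
    omega
  have hm0 : m ≠ 0 := by omega
  haveI : NeZero m := ⟨hm0⟩
  have hcu : IsUnit (c : ZMod m) := by
    rw [ZMod.isUnit_iff_coprime]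
    exact hcm
  set x : ZMod m := (-(a' : ZMod m)) * (c : ZMod m)⁻¹ with hx
  set k := x.val with hk
  have hkm : k < m := ZMod.val_lt x
  refine ⟨2 * k + 1, ⟨k, by ring⟩, by omega, by omega, ?_⟩
  have h1 : (2 * k + 1 + 1) / 2 = k + 1 := by omega
  have h2 : (2 * k + 1 - 1) / 2 = k := by omega
  rw [h1, h2]
  have hmd : m ∣ a' + k * c := by
    have : ((a' + k * c : ℕ) : ZMod m) = 0 := by
      push_cast
      rw [hk, ZMod.natCast_val, ZMod.cast_id, hx, mul_assoc,
        ZMod.inv_mul_of_unit _ hcu, mul_one, add_neg_cancel]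
    exact (ZMod.natCast_eq_zero_iff _ _).mp this
  obtain ⟨t, ht⟩ := hmd
  refine ⟨t, ?_⟩
  have : (k + 1) * a + k * b = 2 * (a' + k * c) := by
    rw [ha', hb', hc]; ring
  rw [this, ht]; ring
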